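/- The constraints consensus algorithm on a jointly strongly connected time-dependent digraph solves the distributed abstract program: in finite time, the candidate basis B^i at each node i satisfies φ(B^i) = φ(H), i.e., it is a solution of (H, φ). Moreover, if (H, φ) has a unique minimal basis B_H, then each node's final candidate basis equals B_H. -/

import Mathlib

/-- `B` is a basis of `G`: a minimal subset of `G` with finite value equal to `φ(G)`. -/
def IsBasisOf {α : Type*} [DecidableEq α] {Φ : Type*} [LinearOrder Φ] [OrderBot Φ]
    (φ : Finset α → Φ) (B G : Finset α) : Prop :=
  B ⊆ G ∧ ⊥ < φ B ∧ φ B = φ G ∧ ∀ B' ⊂ B, φ B' < φ B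

/-- A monotone sequence with finite range is eventually constant. -/
lemma cc_eventually_const {γ : Type*} [PartialOrder γ] (f : ℕ → γ)
    (hf : ∀ t, f t ≤ f (t+1)) (hfin : (Set.range f).Finite) :
    ∃ T, ∀ t, T ≤ t → f t = f T := by
  have hmono : Monotone f := monotone_nat_of_le_succ hf
  obtain ⟨a, ⟨T, rfl⟩, hmax⟩ := Set.Finite.exists_maximalFor id _ hfin (Set.range_nonempty f)
  exact ⟨T, fun t ht => le_antisymm (hmax ⟨t, rfl⟩ (hmono ht)) (hmono ht)⟩

/-- Correctness of the constraints consensus algorithm: on a jointly strongly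
connected time-dependent digraph, in finite time every node's candidate basis
is a solution of `(H, φ)` (a basis of `H`); moreover if `(H, φ)` has a unique
basis `B_H`, every node's final candidate basis equals `B_H`. -/
theorem constraints_consensus_correctness
    {α : Type*} [DecidableEq α] {Φ : Type*} [LinearOrder Φ] [OrderBot Φ]
    (φ : Finset α → Φ)
    (hmono : ∀ F G : Finset α, F ⊆ G → φ F ≤ φ G)
    (hloc : ∀ F G : Finset α, F ⊆ G → ⊥ < φ F → φ F = φ G →
      ∀ h : α, φ G < φ (insert h G) → φ F < φ (insert h F))
    (n : ℕ) (hn : 0 < n) (h : Fin n → α)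
    (H : Finset α) (hH : H = Finset.univ.image h)
    (Nin : ℕ → Fin n → Fin n → Bool)
    (hconn : ∀ (t : ℕ) (i j : Fin n),
      Relation.ReflTransGen (fun a b => ∃ τ, t ≤ τ ∧ Nin τ b a = true) i j)
    (B : ℕ → Fin n → Finset α)
    (hinit : ∀ i, B 0 i = {h i}) (hfin0 : ∃ i, ⊥ < φ (B 0 i))
    (hupd : ∀ (t : ℕ) (i : Fin n),
      IsBasisOf φ (B (t+1) i)
        (insert (h i) (B t i ∪
          (Finset.univ.filter (fun j => Nin t i j = true)).biUnion (B t)))) :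
    ∃ T, (∀ t, T ≤ t → ∀ i, IsBasisOf φ (B t i) H) ∧
      (∀ BH : Finset α, IsBasisOf φ BH H →
        (∀ B' : Finset α, IsBasisOf φ B' H → B' = BH) →
        ∀ t, T ≤ t → ∀ i, B t i = BH) := by
  classical
  -- the update set
  let Gt : ℕ → Fin n → Finset α := fun t i =>
    insert (h i) (B t i ∪ (Finset.univ.filter (fun j => Nin t i j = true)).biUnion (B t))
  have hupd' : ∀ t i, IsBasisOf φ (B (t+1) i) (Gt t i) := hupd
  have hBsubG : ∀ t i, B t i ⊆ Gt t i := fun t i =>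
    Finset.subset_union_left.trans (Finset.subset_insert _ _)
  have hhG : ∀ t i, h i ∈ Gt t i := fun t i => Finset.mem_insert_self _ _
  have hnbrG : ∀ t (a b : Fin n), Nin t b a = true → B t a ⊆ Gt t b := by
    intro t a b hN x hx
    exact Finset.mem_insert_of_mem (Finset.mem_union_right _
      (Finset.mem_biUnion.mpr ⟨a, Finset.mem_filter.mpr ⟨Finset.mem_univ a, hN⟩, hx⟩))
  have hGval : ∀ t i, φ (B (t+1) i) = φ (Gt t i) := fun t i => (hupd' t i).2.2.1
  have hposB : ∀ t i, 1 ≤ t → ⊥ < φ (B t i) := by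
    intro t i ht
    cases t with
    | zero => omega
    | succ s => exact (hupd' s i).2.1
  -- all candidate bases are subsets of H
  have hsubH : ∀ t i, B t i ⊆ H := by
    intro t
    induction t with
    | zero =>
      intro i
      rw [hinit i, Finset.singleton_subset_iff, hH]
      exact Finset.mem_image_of_mem h (Finset.mem_univ i)
    | succ s ih =>
      intro i
      refine (hupd' s i).1.trans ?_
      intro x hx
      simp only [Gt, Finset.mem_insert, Finset.mem_union, Finset.mem_biUnion,
        Finset.mem_filter] at hx
      rcases hx with rfl | hx | ⟨j, _, hx⟩
      · rw [hH]; exact Finset.mem_image_of_mem h (Finset.mem_univ i)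
      · exact ih i hx
      · exact ih j hx
  -- values are nondecreasing
  have hvmono : ∀ t i, φ (B t i) ≤ φ (B (t+1) i) := fun t i =>
    (hmono _ _ (hBsubG t i)).trans_eq (hGval t i).symm
  -- value stabilization
  have hval : ∀ i : Fin n, ∃ T, ∀ t, T ≤ t → φ (B t i) = φ (B T i) := by
    intro i
    apply cc_eventually_const (fun t => φ (B t i)) (fun t => hvmono t i)
    apply Set.Finite.subset (H.powerset.image φ).finite_toSet
    rintro x ⟨t, rfl⟩
    exact Finset.mem_coe.mpr
      (Finset.mem_image_of_mem φ (Finset.mem_powerset.mpr (hsubH t i)))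
  choose T0f hT0f using hval
  set T0 : ℕ := Finset.univ.sup T0f + 1 with hT0def
  have hT0pos : 1 ≤ T0 := Nat.le_add_left _ _
  have hT0i : ∀ i, T0f i ≤ T0 :=
    fun i => (Finset.le_sup (Finset.mem_univ i)).trans (Nat.le_succ _)
  set v : Fin n → Φ := fun i => φ (B T0 i) with hvdef
  have hstabv : ∀ t, T0 ≤ t → ∀ i, φ (B t i) = v i := by
    intro t ht i
    show φ (B t i) = φ (B T0 i)
    rw [hT0f i t ((hT0i i).trans ht), hT0f i T0 (hT0i i)]
  -- values equalize by connectivity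
  have hvle : ∀ i j : Fin n, v i ≤ v j := by
    intro i j
    have hchain := hconn T0 i j
    induction hchain with
    | refl => exact le_rfl
    | @tail b c hib hedge ih =>
      obtain ⟨τ, hτ, hN⟩ := hedge
      calc v i ≤ v b := ih
        _ = φ (B τ b) := (hstabv τ hτ b).symm
        _ ≤ φ (Gt τ c) := hmono _ _ (hnbrG τ b c hN)
        _ = φ (B (τ+1) c) := (hGval τ c).symm
        _ = v c := hstabv (τ+1) (by omega) c
  have hveq : ∀ i j : Fin n, v i = v j := fun i j => le_antisymm (hvle i j) (hvle j i)
  -- transfer of "no increase" up from subsets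
  have hup : ∀ F G : Finset α, F ⊆ G → ⊥ < φ F → φ F = φ G →
      ∀ a, φ (insert a F) ≤ φ F → φ (insert a G) ≤ φ G := by
    intro F G hFG hb he a hno
    by_contra hcon
    push_neg at hcon
    exact absurd (hloc F G hFG hb he a hcon) (not_lt.mpr hno)
  -- sets of "satisfied" constraints
  let N : ℕ → Fin n → Finset (Fin n) := fun t i =>
    Finset.univ.filter (fun k => φ (insert (h k) (B t i)) ≤ φ (B t i))
  have hNmem : ∀ t i k, k ∈ N t i ↔ φ (insert (h k) (B t i)) ≤ φ (B t i) := by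
    intro t i k
    simp [N]
  have hself : ∀ t i, 1 ≤ t → i ∈ N t i := by
    intro t i ht
    cases t with
    | zero => omega
    | succ s =>
      rw [hNmem]
      calc φ (insert (h i) (B (s+1) i)) ≤ φ (Gt s i) :=
            hmono _ _ (Finset.insert_subset (hhG s i) (hupd' s i).1)
        _ = φ (B (s+1) i) := (hGval s i).symm
  have hpers : ∀ t, T0 ≤ t → ∀ i k, k ∈ N t i → k ∈ N (t+1) i := by
    intro t ht i k hk
    rw [hNmem] at hk ⊢
    have hb : ⊥ < φ (B t i) := hposB t i (hT0pos.trans ht)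
    have he : φ (B t i) = φ (Gt t i) := by
      rw [hstabv t ht i, ← hGval t i, hstabv (t+1) (by omega) i]
    have h2 := hup (B t i) (Gt t i) (hBsubG t i) hb he (h k) hk
    calc φ (insert (h k) (B (t+1) i)) ≤ φ (insert (h k) (Gt t i)) :=
          hmono _ _ (Finset.insert_subset_insert _ (hupd' t i).1)
      _ ≤ φ (Gt t i) := h2
      _ = φ (B (t+1) i) := (hGval t i).symm
  have hprop : ∀ τ, T0 ≤ τ → ∀ a b k, Nin τ b a = true → k ∈ N τ a → k ∈ N (τ+1) b := by
    intro τ hτ a b k hN hk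
    rw [hNmem] at hk ⊢
    have hb : ⊥ < φ (B τ a) := hposB τ a (hT0pos.trans hτ)
    have he : φ (B τ a) = φ (Gt τ b) := by
      rw [hstabv τ hτ a, ← hGval τ b, hstabv (τ+1) (by omega) b]
      exact hveq a b
    have h2 := hup (B τ a) (Gt τ b) (hnbrG τ a b hN) hb he (h k) hk
    calc φ (insert (h k) (B (τ+1) b)) ≤ φ (insert (h k) (Gt τ b)) :=
          hmono _ _ (Finset.insert_subset_insert _ (hupd' τ b).1)
      _ ≤ φ (Gt τ b) := h2
      _ = φ (B (τ+1) b) := (hGval τ b).symm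
  -- stabilization of the N sets
  have hNev : ∀ i, ∃ T, ∀ s, T ≤ s → N (T0 + s) i = N (T0 + T) i := by
    intro i
    apply cc_eventually_const (fun s => N (T0 + s) i)
    · intro s
      exact Finset.le_iff_subset.mpr
        (fun k hk => hpers (T0 + s) (Nat.le_add_right _ _) i k hk)
    · exact Set.toFinite _
  choose T1f hT1f using hNev
  set T1 : ℕ := T0 + Finset.univ.sup T1f with hT1def
  have hT0T1 : T0 ≤ T1 := Nat.le_add_right _ _
  have hT1pos : 1 ≤ T1 := hT0pos.trans hT0T1
  have hNstab : ∀ t, T1 ≤ t → ∀ i, N t i = N T1 i := by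
    intro t ht i
    have hi : T1f i ≤ Finset.univ.sup T1f := Finset.le_sup (Finset.mem_univ i)
    obtain ⟨s, rfl⟩ : ∃ s, t = T0 + s := ⟨t - T0, by omega⟩
    rw [hT1f i s (by omega), hT1f i (Finset.univ.sup T1f) hi]
  have hNsub : ∀ a b : Fin n, N T1 a ⊆ N T1 b := by
    intro a b
    have hchain := hconn T1 a b
    induction hchain with
    | refl => exact subset_rfl
    | @tail x c hax hedge ih =>
      obtain ⟨τ, hτ, hN⟩ := hedge
      refine ih.trans ?_
      intro k hk
      have hk' : k ∈ N τ x := by rw [hNstab τ hτ x]; exact hk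
      have hk'' := hprop τ (hT0T1.trans hτ) x c k hN hk'
      rw [← hNstab (τ+1) (by omega) c]
      exact hk''
  have hNfull : ∀ (i k : Fin n), k ∈ N T1 i :=
    fun i k => hNsub k i (hself T1 k hT1pos)
  have hnoinc : ∀ t, T1 ≤ t → ∀ i k, φ (insert (h k) (B t i)) ≤ φ (B t i) := by
    intro t ht i k
    have hk := hNfull i k
    rw [← hNstab t ht i] at hk
    exact (hNmem t i k).mp hk
  -- adding any subset of H does not increase the value
  have hunion : ∀ t, T1 ≤ t → ∀ i, ∀ S : Finset α, S ⊆ H → φ (B t i ∪ S) ≤ φ (B t i) := by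
    intro t ht i S
    induction S using Finset.induction_on with
    | empty => intro _; rw [Finset.union_empty]
    | @insert a S ha ih =>
      intro hins
      have haH : a ∈ H := hins (Finset.mem_insert_self a S)
      rw [hH] at haH
      obtain ⟨k, -, rfl⟩ := Finset.mem_image.mp haH
      have hSH : S ⊆ H := (Finset.subset_insert _ S).trans hins
      have ihS := ih hSH
      have he : φ (B t i) = φ (B t i ∪ S) :=
        le_antisymm (hmono _ _ Finset.subset_union_left) ihS
      have h2 := hup (B t i) (B t i ∪ S) Finset.subset_union_left
        (hposB t i (hT1pos.trans ht)) he (h k) (hnoinc t ht i k)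
      calc φ (B t i ∪ insert (h k) S) = φ (insert (h k) (B t i ∪ S)) := by
            rw [Finset.union_insert]
        _ ≤ φ (B t i ∪ S) := h2
        _ ≤ φ (B t i) := ihS
  have hfinal : ∀ t, T1 ≤ t → ∀ i, φ (B t i) = φ H := by
    intro t ht i
    have h1 : B t i ∪ H = H := Finset.union_eq_right.mpr (hsubH t i)
    have h2 := hunion t ht i H subset_rfl
    rw [h1] at h2
    exact le_antisymm (hmono _ _ (hsubH t i)) h2
  have hbasis : ∀ t, T1 ≤ t → ∀ i, IsBasisOf φ (B t i) H := by
    intro t ht i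
    refine ⟨hsubH t i, hposB t i (hT1pos.trans ht), hfinal t ht i, ?_⟩
    cases t with
    | zero => omega
    | succ s => exact (hupd' s i).2.2.2
  exact ⟨T1, hbasis, fun BH hBH huniq t ht i => huniq (B t i) (hbasis t ht i)⟩
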